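/- arXiv:2204.10301 — 2 statements merged into one kernel-verified Lean document; each statement's English description precedes it below -/
import Mathlib

section
/- Suppose G = N·Z(G), where Z(G) is the centre of G. Then for any θ ∈ Irr(N) and any two characters χ, χ' ∈ Irr(G) lying over θ, there exists a linear character β of G with N contained in its kernel such that χ' = χ·β. In other words, the group of linear characters of G/N acts transitively on Irr(G | θ). -/
open scoped Classical Pointwise

noncomputable section

namespace CT

/-- `f` is the character of some finite-dimensional complex representation of `G`. -/
def IsChar (G : Type*) [Group G] (f : G → ℂ) : Prop :=
  ∃ (n : ℕ) (ρ : Representation ℂ G (Fin n → ℂ)),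
    f = fun g => LinearMap.trace ℂ (Fin n → ℂ) (ρ g)

/-- The usual inner product of class functions on a finite group. -/
def cInner (G : Type*) [Group G] [Fintype G] (f g : G → ℂ) : ℂ :=
  (Fintype.card G : ℂ)⁻¹ * ∑ x : G, f x * starRingEnd ℂ (g x)

/-- `f` is an irreducible (complex) character of `G`. -/
def IsIrr (G : Type*) [Group G] [Fintype G] (f : G → ℂ) : Prop :=
  IsChar G f ∧ cInner G f f = 1

variable {G : Type*} [Group G]

/-- Restriction of a class function to a subgroup. -/
def res (H : Subgroup G) (f : G → ℂ) : H → ℂ := fun h => f h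

/-- A character `f` of `G` lies over a character `l` of the subgroup `H` if `l` occurs
as a constituent of the restriction of `f` to `H`. -/
def LiesOver [Fintype G] (H : Subgroup G) (f : G → ℂ) (l : H → ℂ) : Prop :=
  cInner H (res H f) l ≠ 0

/-- The induced class function from a subgroup `H` to `G`. -/
def ind [Fintype G] (H : Subgroup G) (f : H → ℂ) : G → ℂ := fun g =>
  (Fintype.card H : ℂ)⁻¹ *
    ∑ x : G, if h : x * g * x⁻¹ ∈ H then f ⟨x * g * x⁻¹, h⟩ else 0

/-- The conjugate `f^a` of a class function `f` on a (normal) subgroup `N`,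
given by `n ↦ f (a * n * a⁻¹)`. -/
def conjFun (N : Subgroup G) (a : G) (f : N → ℂ) : N → ℂ := fun n =>
  if h : a * (n : G) * a⁻¹ ∈ N then f ⟨a * (n : G) * a⁻¹, h⟩ else 0

theorem conjFun_apply (N : Subgroup G) [hN : N.Normal] (a : G) (f : N → ℂ) (n : N) :
    conjFun N a f n = f ⟨a * (n : G) * a⁻¹, hN.conj_mem _ n.2 a⟩ := dif_pos _

theorem conjFun_one (N : Subgroup G) [hN : N.Normal] (f : N → ℂ) :
    conjFun N 1 f = f := by
  funext n
  rw [conjFun_apply N]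
  congr 1
  exact Subtype.ext (by group)

theorem conjFun_mul (N : Subgroup G) [hN : N.Normal] (a b : G) (f : N → ℂ) :
    conjFun N (a * b) f = conjFun N b (conjFun N a f) := by
  funext n
  rw [conjFun_apply N, conjFun_apply N, conjFun_apply N]
  congr 1
  exact Subtype.ext (by group)

/-- The stabilizer of a class function of a normal subgroup `N` under the
conjugation action of `G`. -/
def charStabilizer (N : Subgroup G) [hN : N.Normal] (f : N → ℂ) : Subgroup G where
  carrier := {a : G | conjFun N a f = f}
  one_mem' := conjFun_one N f
  mul_mem' := by
    intro a b ha hb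
    show conjFun N (a * b) f = f
    rw [conjFun_mul N a b f]
    rw [show conjFun N a f = f from ha]
    exact hb
  inv_mem' := by
    intro a ha
    show conjFun N a⁻¹ f = f
    have h : conjFun N (a * a⁻¹) f = conjFun N a⁻¹ f := by
      rw [conjFun_mul N a a⁻¹ f]
      rw [show conjFun N a f = f from ha]
    rw [← h, mul_inv_cancel, conjFun_one]

/-- Transport of a class function on `N` to the copy `N.subgroupOf K` of `N` inside `K`. -/
def resOf {K : Subgroup G} (N : Subgroup G) (f : N → ℂ) : (N.subgroupOf K) → ℂ :=
  fun x => f ⟨((x : ↥K) : G), Subgroup.mem_subgroupOf.mp x.2⟩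

/-- The `p`-part of a natural number. -/
def lpart (p n : ℕ) : ℕ := p ^ (n.factorization p)

end CT

namespace CT

section Aux

open LinearMap Module Representation

variable {H : Type*} [Group H]
variable {V : Type*} [AddCommGroup V] [Module ℂ V] [FiniteDimensional ℂ V]
variable {W : Type*} [AddCommGroup W] [Module ℂ W] [FiniteDimensional ℂ W]

theorem trace_linHom' (ρV : Representation ℂ H V) (ρW : Representation ℂ H W) (g : H) :
    trace ℂ _ ((ρV.linHom ρW) g) = trace ℂ V (ρV g⁻¹) * trace ℂ W (ρW g) := by
  have hcomm := Representation.dualTensorHom_comm ρV ρW g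
  set e := dualTensorHomEquiv ℂ V W with he'
  have he : (ρV.linHom ρW) g = e.conj (TensorProduct.map (ρV.dual g) (ρW g)) := by
    ext f : 1
    rw [LinearEquiv.conj_apply_apply]
    have h2 := congrArg (fun (T : _ →ₗ[ℂ] (V →ₗ[ℂ] W)) => T (e.symm f)) hcomm
    simp only [LinearMap.comp_apply] at h2
    have h3 : (dualTensorHom ℂ V W) (e.symm f) = f := by
      simp [he', dualTensorHomEquiv]
    rw [h3] at h2
    rw [← h2]
    simp [he', dualTensorHomEquiv]
  rw [he, trace_conj', trace_tensorProduct', dual_apply, trace_transpose']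

theorem avg_trace [Fintype H] (ρ : Representation ℂ H V) :
    (Fintype.card H : ℂ)⁻¹ * ∑ g : H, trace ℂ V (ρ g) = (finrank ℂ ρ.invariants : ℂ) := by
  letI : Invertible (Fintype.card H : ℂ) :=
    invertibleOfNonzero (Nat.cast_ne_zero.mpr Fintype.card_ne_zero)
  have h := (Representation.isProj_averageMap ρ).trace
  rw [Representation.averageMap, GroupAlgebra.average] at h
  simp only [map_smul, map_sum, Representation.asAlgebraHom_single, MonoidAlgebra.of_apply,
    one_smul] at h
  rw [invOf_eq_inv, smul_eq_mul] at h
  exact h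

theorem conj_trace_eq_trace_inv (A B : V →ₗ[ℂ] V) (hBA : B ∘ₗ A = LinearMap.id)
    (k : ℕ) (hk : 0 < k) (hA : A ^ k = 1) :
    starRingEnd ℂ (trace ℂ V A) = trace ℂ V B := by
  set f : Module.End ℂ V := A with hf
  have hss : f.IsSemisimple := by
    apply Module.End.isSemisimple_of_squarefree_aeval_eq_zero
      (p := Polynomial.X ^ k - 1)
    · exact (Polynomial.X_pow_sub_one_separable_iff.mpr
        (by exact_mod_cast (Nat.cast_ne_zero (R := ℂ)).mpr hk.ne')).squarefree
    · simp [map_pow, hA]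
  have hroot : ∀ μ : ℂ, f.HasEigenvalue μ → μ ^ k = 1 := by
    intro μ hμ
    obtain ⟨v, hv⟩ := hμ.exists_hasEigenvector
    have hpow : ∀ m : ℕ, (f ^ m) v = μ ^ m • v := by
      intro m
      induction m with
      | zero => simp
      | succ m ih =>
        rw [pow_succ, Module.End.mul_apply, hv.apply_eq_smul, map_smul, ih, smul_smul,
          pow_succ, mul_comm]
    have hpow := hpow k
    rw [hA] at hpow
    have : (μ ^ k - 1) • v = 0 := by
      rw [sub_smul, one_smul, ← hpow]; simp
    rcases smul_eq_zero.mp this with h | h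
    · exact sub_eq_zero.mp h
    · exact absurd h hv.right
  have hSup : ⨆ μ : ℂ, f.eigenspace μ = ⊤ := by
    have h := Module.End.iSup_maxGenEigenspace_eq_top f
    simp_rw [hss.isFinitelySemisimple.maxGenEigenspace_eq_eigenspace] at h
    exact h
  have hTop : ⨆ μ : f.Eigenvalues, f.eigenspace ↑μ = ⊤ := by
    refine le_antisymm le_top ?_
    rw [← hSup]
    refine iSup_le fun μ => ?_
    by_cases h : f.HasEigenvalue μ
    · exact le_iSup_of_le ⟨μ, h⟩ le_rfl
    · rw [not_not.mp (fun hne => h (Module.End.hasEigenvalue_iff.mpr hne))]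
      exact bot_le
  have hInd : iSupIndep (fun μ : f.Eigenvalues => f.eigenspace ↑μ) :=
    f.eigenspaces_iSupIndep.comp Subtype.val_injective
  have hInt := DirectSum.isInternal_submodule_of_iSupIndep_of_iSup_eq_top hInd hTop
  set b := hInt.collectedBasis (fun μ : f.Eigenvalues => finBasis ℂ (f.eigenspace ↑μ)) with hb
  have hmem : ∀ j, b j ∈ f.eigenspace (j.1.1 : ℂ) := fun j => hInt.collectedBasis_mem _ j
  have hAb : ∀ j, A (b j) = (j.1.1 : ℂ) • b j := fun j =>
    Module.End.mem_eigenspace_iff.mp (hmem j)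
  have hne : ∀ j : (Σ μ : f.Eigenvalues, Fin (finrank ℂ (f.eigenspace ↑μ))),
      (j.1.1 : ℂ) ≠ 0 := by
    intro j h0
    have h := hroot _ j.1.2
    rw [h0, zero_pow hk.ne'] at h
    exact zero_ne_one h
  have hBb : ∀ j, B (b j) = (j.1.1 : ℂ)⁻¹ • b j := by
    intro j
    have h1 : B (A (b j)) = b j := by
      have := congrArg (fun T : V →ₗ[ℂ] V => T (b j)) hBA
      simpa using this
    rw [hAb, map_smul] at h1
    conv_rhs => rw [← h1]
    rw [smul_smul, inv_mul_cancel₀ (hne j), one_smul]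
  have hconj : ∀ j : (Σ μ : f.Eigenvalues, Fin (finrank ℂ (f.eigenspace ↑μ))),
      starRingEnd ℂ (j.1.1 : ℂ) = (j.1.1 : ℂ)⁻¹ := by
    intro j
    have habs : ‖(j.1.1 : ℂ)‖ = 1 := by
      have h1 := congrArg (‖·‖) (hroot _ j.1.2)
      rw [norm_pow, norm_one] at h1
      rcases (pow_eq_one_iff_cases).mp h1 with h | h | h
      · omega
      · exact h
      · linarith [h.1, norm_nonneg (j.1.1 : ℂ)]
    rw [← Complex.inv_eq_conj habs]
  have htr : ∀ C : V →ₗ[ℂ] V, trace ℂ V C = ∑ j, (b.repr (C (b j))) j := by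
    intro C
    rw [trace_eq_matrix_trace ℂ b C, Matrix.trace]
    congr 1
    ext j
    rw [Matrix.diag_apply, LinearMap.toMatrix_apply]
  have hrep : ∀ (j) (c : ℂ), (b.repr (c • b j)) j = c := by
    intro j c
    rw [map_smul, b.repr_self]
    simp
  rw [htr A, htr B]
  rw [map_sum]
  refine Finset.sum_congr rfl fun j _ => ?_
  rw [hAb, hBb, hrep, hrep, hconj]

theorem rep_inv_apply {U : Type*} [AddCommGroup U] [Module ℂ U]
    (σ : Representation ℂ H U) (g : H) (v : U) : σ g (σ g⁻¹ v) = v := by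
  rw [← Module.End.mul_apply, ← map_mul, mul_inv_cancel, map_one, Module.End.one_apply]

theorem rep_inv_apply' {U : Type*} [AddCommGroup U] [Module ℂ U]
    (σ : Representation ℂ H U) (g : H) (v : U) : σ g⁻¹ (σ g v) = v := by
  rw [← Module.End.mul_apply, ← map_mul, inv_mul_cancel, map_one, Module.End.one_apply]

omit [FiniteDimensional ℂ V] [FiniteDimensional ℂ W] in
theorem mem_linHom_invariants (ρ : Representation ℂ H V) (τ : Representation ℂ H W)
    (T : W →ₗ[ℂ] V) :
    T ∈ (τ.linHom ρ).invariants ↔ ∀ g : H, ρ g ∘ₗ T = T ∘ₗ τ g := by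
  rw [Representation.mem_invariants]
  constructor
  · intro h g
    have h1 := h g
    rw [linHom_apply] at h1
    ext v
    have h2 := congrArg (fun S : W →ₗ[ℂ] V => S (τ g v)) h1
    simp only [LinearMap.comp_apply] at h2 ⊢
    rw [rep_inv_apply' τ g v] at h2
    exact h2
  · intro h g
    rw [linHom_apply]
    ext v
    have h2 := congrArg (fun S : W →ₗ[ℂ] V => S (τ g⁻¹ v)) (h g)
    simp only [LinearMap.comp_apply] at h2 ⊢
    rw [rep_inv_apply τ g v] at h2
    exact h2

theorem nontrivial_of_commutant_one (ρ : Representation ℂ H V)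
    (h1 : finrank ℂ (ρ.linHom ρ).invariants = 1) : Nontrivial V := by
  by_contra hn
  have : Subsingleton V := not_nontrivial_iff_subsingleton.mp hn
  have : Subsingleton (V →ₗ[ℂ] V) := ⟨fun a b => by ext v; exact Subsingleton.elim _ _⟩
  have : (ρ.linHom ρ).invariants = ⊥ := Subsingleton.elim _ _
  rw [this] at h1
  simp [finrank_bot] at h1

theorem scalar_of_commutant_one (ρ : Representation ℂ H V)
    (h1 : finrank ℂ (ρ.linHom ρ).invariants = 1)
    (T : V →ₗ[ℂ] V) (hT : ∀ g : H, ρ g ∘ₗ T = T ∘ₗ ρ g) :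
    ∃ c : ℂ, T = c • LinearMap.id := by
  have hidmem : (LinearMap.id : V →ₗ[ℂ] V) ∈ (ρ.linHom ρ).invariants :=
    (mem_linHom_invariants ρ ρ _).mpr (fun g => by ext v; simp)
  have hnontriv : Nontrivial V := nontrivial_of_commutant_one ρ h1
  have hid0 : (LinearMap.id : V →ₗ[ℂ] V) ≠ 0 := by
    intro h
    obtain ⟨v, hv⟩ := exists_ne (0 : V)
    exact hv (by simpa using congrArg (fun T : V →ₗ[ℂ] V => T v) h)
  have hspan : Submodule.span ℂ {(LinearMap.id : V →ₗ[ℂ] V)} = (ρ.linHom ρ).invariants := by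
    apply Submodule.eq_of_le_of_finrank_le
    · rw [Submodule.span_le, Set.singleton_subset_iff]; exact hidmem
    · rw [h1, finrank_span_singleton hid0]
  have hTmem : T ∈ (ρ.linHom ρ).invariants := (mem_linHom_invariants ρ ρ T).mpr hT
  rw [← hspan, Submodule.mem_span_singleton] at hTmem
  obtain ⟨c, hc⟩ := hTmem
  exact ⟨c, hc.symm⟩

theorem invariant_bot_or_top [Fintype H] (ρ : Representation ℂ H V)
    (h1 : finrank ℂ (ρ.linHom ρ).invariants = 1)
    (p : Submodule ℂ V) (hp : ∀ (g : H), ∀ v ∈ p, ρ g v ∈ p) :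
    p = ⊥ ∨ p = ⊤ := by
  obtain ⟨q, hq⟩ := p.exists_isCompl
  set π : V →ₗ[ℂ] V := p.subtype ∘ₗ (p.linearProjOfIsCompl q hq) with hπ
  have hπmem : ∀ v : V, π v ∈ p := fun v => (p.linearProjOfIsCompl q hq v).2
  have hπid : ∀ v ∈ p, π v = v := fun v hv => by
    rw [hπ, LinearMap.comp_apply]
    exact congrArg Subtype.val (Submodule.projectionOnto_apply_left hq ⟨v, hv⟩)
  have hcard : (Fintype.card H : ℂ) ≠ 0 := Nat.cast_ne_zero.mpr Fintype.card_ne_zero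
  set e : V →ₗ[ℂ] V := (Fintype.card H : ℂ)⁻¹ •
      ∑ g : H, ρ g ∘ₗ π ∘ₗ ρ g⁻¹ with he
  have hemem : ∀ v : V, e v ∈ p := by
    intro v
    rw [he]
    simp only [LinearMap.smul_apply, LinearMap.sum_apply, LinearMap.comp_apply]
    exact Submodule.smul_mem _ _ (Submodule.sum_mem _ fun g _ => hp g _ (hπmem _))
  have heid : ∀ v ∈ p, e v = v := by
    intro v hv
    rw [he]
    simp only [LinearMap.smul_apply, LinearMap.sum_apply, LinearMap.comp_apply]
    have : ∀ g : H, ρ g (π (ρ g⁻¹ v)) = v := by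
      intro g
      rw [hπid _ (hp g⁻¹ _ hv), rep_inv_apply]
    rw [Finset.sum_congr rfl (fun g _ => this g), Finset.sum_const, Finset.card_univ,
      ← Nat.cast_smul_eq_nsmul ℂ, smul_smul, inv_mul_cancel₀ hcard, one_smul]
  have hcomm : ∀ h : H, ρ h ∘ₗ e = e ∘ₗ ρ h := by
    intro h
    rw [he]
    ext v
    simp only [LinearMap.comp_apply, LinearMap.smul_apply, LinearMap.sum_apply, map_smul,
      map_sum]
    congr 1
    rw [← Equiv.sum_comp (Equiv.mulLeft h) (fun g => ρ g (π (ρ g⁻¹ (ρ h v))))]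
    refine Finset.sum_congr rfl fun g _ => ?_
    simp only [Equiv.coe_mulLeft]
    rw [← Module.End.mul_apply (ρ h) (ρ g), ← map_mul]
    congr 2
    rw [← Module.End.mul_apply _ (ρ h), ← map_mul]
    congr 2
    group
  obtain ⟨c, hc⟩ := scalar_of_commutant_one ρ h1 e hcomm
  by_cases hbot : p = ⊥
  · exact Or.inl hbot
  · right
    obtain ⟨v, hv, hv0⟩ := Submodule.exists_mem_ne_zero_of_ne_bot hbot
    have h2 : c • v = v := by
      have := heid v hv
      rw [hc] at this
      simpa using this
    have hc1 : c = 1 := by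
      by_contra hcne
      have : (c - 1) • v = 0 := by rw [sub_smul, one_smul, h2, sub_self]
      rcases smul_eq_zero.mp this with h | h
      · exact hcne (sub_eq_zero.mp h)
      · exact hv0 h
    rw [eq_top_iff]
    intro w _
    have : e w = w := by rw [hc, hc1]; simp
    rw [← this]
    exact hemem w

theorem trace_eq_of_hom [Fintype H] (ρ : Representation ℂ H V) (τ : Representation ℂ H W)
    (hρ : finrank ℂ (ρ.linHom ρ).invariants = 1)
    (hτ : finrank ℂ (τ.linHom τ).invariants = 1)
    (hhom : finrank ℂ (τ.linHom ρ).invariants ≠ 0) :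
    ∀ g : H, trace ℂ V (ρ g) = trace ℂ W (τ g) := by
  have hne : (τ.linHom ρ).invariants ≠ ⊥ := by
    intro h
    rw [h] at hhom
    simp at hhom
  obtain ⟨φ, hφmem, hφ0⟩ := Submodule.exists_mem_ne_zero_of_ne_bot hne
  have hφ : ∀ g : H, ρ g ∘ₗ φ = φ ∘ₗ τ g := (mem_linHom_invariants ρ τ φ).mp hφmem
  have hker : ∀ (g : H), ∀ v ∈ ker φ, τ g v ∈ ker φ := by
    intro g v hv
    rw [mem_ker] at hv ⊢
    have := congrArg (fun S : W →ₗ[ℂ] V => S v) (hφ g)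
    simp only [LinearMap.comp_apply] at this
    rw [← this, hv, map_zero]
  have hrange : ∀ (g : H), ∀ v ∈ range φ, ρ g v ∈ range φ := by
    rintro g v ⟨w, rfl⟩
    have := congrArg (fun S : W →ₗ[ℂ] V => S w) (hφ g)
    simp only [LinearMap.comp_apply] at this
    exact ⟨τ g w, this.symm⟩
  have hker0 : ker φ = ⊥ := by
    rcases invariant_bot_or_top τ hτ (ker φ) hker with h | h
    · exact h
    · exact absurd (ker_eq_top.mp h) hφ0
  have hrange1 : range φ = ⊤ := by
    rcases invariant_bot_or_top ρ hρ (range φ) hrange with h | h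
    · exact absurd (range_eq_bot.mp h) hφ0
    · exact h
  have hbij : Function.Bijective φ :=
    ⟨ker_eq_bot.mp hker0, range_eq_top.mp hrange1⟩
  set eφ := LinearEquiv.ofBijective φ hbij with heφ
  intro g
  have hconj : ρ g = eφ.conj (τ g) := by
    ext v
    rw [LinearEquiv.conj_apply_apply]
    have h2 := congrArg (fun S : W →ₗ[ℂ] V => S (eφ.symm v)) (hφ g)
    simp only [LinearMap.comp_apply] at h2
    have h4 : (φ : W →ₗ[ℂ] V) (eφ.symm v) = v := eφ.apply_symm_apply v
    rw [h4] at h2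
    exact h2
  rw [hconj, trace_conj']

omit [FiniteDimensional ℂ V] in
theorem smul_id_inj [Nontrivial V] {a b : ℂ}
    (h : a • (LinearMap.id : V →ₗ[ℂ] V) = b • LinearMap.id) : a = b := by
  obtain ⟨v, hv⟩ := exists_ne (0 : V)
  have h2 := congrArg (fun S : V →ₗ[ℂ] V => S v) h
  simp only [LinearMap.smul_apply, LinearMap.id_apply] at h2
  have : (a - b) • v = 0 := by rw [sub_smul, h2, sub_self]
  rcases smul_eq_zero.mp this with h3 | h3
  · exact sub_eq_zero.mp h3
  · exact absurd h3 hv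

theorem cInner_char [Fintype H] (ρ : Representation ℂ H V) (τ : Representation ℂ H W) :
    cInner H (fun g => trace ℂ V (ρ g)) (fun g => trace ℂ W (τ g))
      = (finrank ℂ (τ.linHom ρ).invariants : ℂ) := by
  unfold cInner
  rw [← avg_trace (τ.linHom ρ)]
  congr 1
  apply Finset.sum_congr rfl
  intro x _
  have hcomp : τ x⁻¹ ∘ₗ τ x = LinearMap.id := by
    rw [← Module.End.mul_eq_comp, ← map_mul, inv_mul_cancel, map_one]
    rfl
  have hpow : (τ x) ^ orderOf x = 1 := by
    rw [← map_pow, pow_orderOf_eq_one, map_one]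
  have hct : starRingEnd ℂ (trace ℂ W (τ x)) = trace ℂ W (τ x⁻¹) :=
    conj_trace_eq_trace_inv (τ x) (τ x⁻¹) hcomp (orderOf x) (orderOf_pos x) hpow
  rw [hct, trace_linHom' τ ρ x]
  ring

end Aux


/-- Suppose `G = N·Z(G)`.  Then for any `θ ∈ Irr(N)` and any
`χ, χ' ∈ Irr(G)` lying over `θ` there is a linear character `β` of `G` with `N ≤ ker β`
such that `χ' = χ·β`. -/
theorem stmt3 {G : Type*} [Group G] [Fintype G] (N : Subgroup G) [N.Normal]
    (hGZ : ∀ g : G, ∃ n ∈ N, ∃ z ∈ Subgroup.center G, g = n * z)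
    (θ : N → ℂ) (hθ : IsIrr N θ)
    (χ χ' : G → ℂ) (hχ : IsIrr G χ) (hχ' : IsIrr G χ')
    (h1 : LiesOver N χ θ) (h2 : LiesOver N χ' θ) :
    ∃ β : G →* ℂ, (∀ n ∈ N, β n = 1) ∧ χ' = fun g => χ g * β g := by
  classical
  obtain ⟨nχ, ρ, hρ⟩ := hχ.1
  obtain ⟨nχ', ρ', hρ'⟩ := hχ'.1
  obtain ⟨m, τ, hτ⟩ := hθ.1
  -- irreducibility in terms of intertwiner dimensions
  have hρirr : Module.finrank ℂ ((ρ.linHom ρ)).invariants = 1 := by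
    have h := cInner_char ρ ρ
    rw [← hρ] at h
    rw [hχ.2] at h
    exact_mod_cast h.symm
  have hρ'irr : Module.finrank ℂ ((ρ'.linHom ρ')).invariants = 1 := by
    have h := cInner_char ρ' ρ'
    rw [← hρ'] at h
    rw [hχ'.2] at h
    exact_mod_cast h.symm
  have hτirr : Module.finrank ℂ ((τ.linHom τ)).invariants = 1 := by
    have h := cInner_char τ τ
    rw [← hτ] at h
    rw [hθ.2] at h
    exact_mod_cast h.symm
  -- restrictions to N
  set σ : Representation ℂ ↥N (Fin nχ → ℂ) := ρ.comp N.subtype with hσdef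
  set σ' : Representation ℂ ↥N (Fin nχ' → ℂ) := ρ'.comp N.subtype with hσ'def
  have hresχ : res N χ = fun h => LinearMap.trace ℂ _ (σ h) := by
    funext h; rw [res, hρ]; rfl
  have hresχ' : res N χ' = fun h => LinearMap.trace ℂ _ (σ' h) := by
    funext h; rw [res, hρ']; rfl
  -- nontriviality and dimension
  haveI hν : Nontrivial (Fin nχ → ℂ) := nontrivial_of_commutant_one ρ hρirr
  haveI hν' : Nontrivial (Fin nχ' → ℂ) := nontrivial_of_commutant_one ρ' hρ'irr
  have hχ1 : χ 1 = (Module.finrank ℂ (Fin nχ → ℂ) : ℂ) := by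
    rw [hρ]; simp only [map_one]; exact LinearMap.trace_one ℂ _
  have hχ'1e : χ' 1 = (Module.finrank ℂ (Fin nχ' → ℂ) : ℂ) := by
    rw [hρ']; simp only [map_one]; exact LinearMap.trace_one ℂ _
  have hχ10 : χ 1 ≠ 0 := by
    rw [hχ1]
    exact_mod_cast (Module.finrank_pos (R := ℂ) (M := Fin nχ → ℂ)).ne'
  have hχ'10 : χ' 1 ≠ 0 := by
    rw [hχ'1e]
    exact_mod_cast (Module.finrank_pos (R := ℂ) (M := Fin nχ' → ℂ)).ne'
  -- central elements act by scalars
  have hscal : ∀ z ∈ Subgroup.center G, ρ z = ((χ z) / (χ 1)) • LinearMap.id := by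
    intro z hz
    obtain ⟨c, hc⟩ := scalar_of_commutant_one ρ hρirr (ρ z) (fun g => by
      rw [← Module.End.mul_eq_comp, ← Module.End.mul_eq_comp, ← map_mul, ← map_mul,
        (Subgroup.mem_center_iff.mp hz g)])
    have hcc : χ z = c * χ 1 := by
      rw [hρ]
      simp only
      rw [hc, map_smul, smul_eq_mul]
      congr 1
      rw [map_one]
      try rfl
    rw [hc, hcc, mul_div_cancel_right₀ c hχ10]
  have hscal' : ∀ z ∈ Subgroup.center G, ρ' z = ((χ' z) / (χ' 1)) • LinearMap.id := by
    intro z hz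
    obtain ⟨c, hc⟩ := scalar_of_commutant_one ρ' hρ'irr (ρ' z) (fun g => by
      rw [← Module.End.mul_eq_comp, ← Module.End.mul_eq_comp, ← map_mul, ← map_mul,
        (Subgroup.mem_center_iff.mp hz g)])
    have hcc : χ' z = c * χ' 1 := by
      rw [hρ']
      simp only
      rw [hc, map_smul, smul_eq_mul]
      congr 1
      rw [map_one]
      try rfl
    rw [hc, hcc, mul_div_cancel_right₀ c hχ'10]
  -- restriction to N remains irreducible
  have hSeq : (σ.linHom σ).invariants = (ρ.linHom ρ).invariants := by
    ext T
    rw [mem_linHom_invariants, mem_linHom_invariants]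
    constructor
    · intro hT g
      obtain ⟨u, hu, z, hz, rfl⟩ := hGZ g
      have hTu : ρ u ∘ₗ T = T ∘ₗ ρ u := hT ⟨u, hu⟩
      have h3 : ∀ v, ρ u (T v) = T (ρ u v) := by
        intro v
        have := congrArg (fun S : _ →ₗ[ℂ] _ => S v) hTu
        simpa using this
      rw [map_mul, hscal z hz]
      ext v
      simp only [LinearMap.comp_apply, Module.End.mul_apply, LinearMap.smul_apply,
        LinearMap.id_apply, map_smul]
      rw [h3]
    · intro hT nn
      exact hT (↑nn : G)
  have hS'eq : (σ'.linHom σ').invariants = (ρ'.linHom ρ').invariants := by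
    ext T
    rw [mem_linHom_invariants, mem_linHom_invariants]
    constructor
    · intro hT g
      obtain ⟨u, hu, z, hz, rfl⟩ := hGZ g
      have hTu : ρ' u ∘ₗ T = T ∘ₗ ρ' u := hT ⟨u, hu⟩
      have h3 : ∀ v, ρ' u (T v) = T (ρ' u v) := by
        intro v
        have := congrArg (fun S : _ →ₗ[ℂ] _ => S v) hTu
        simpa using this
      rw [map_mul, hscal' z hz]
      ext v
      simp only [LinearMap.comp_apply, Module.End.mul_apply, LinearMap.smul_apply,
        LinearMap.id_apply, map_smul]
      rw [h3]
    · intro hT nn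
      exact hT (↑nn : G)
  have hσirr : Module.finrank ℂ (σ.linHom σ).invariants = 1 := by rw [hSeq]; exact hρirr
  have hσ'irr : Module.finrank ℂ (σ'.linHom σ').invariants = 1 := by rw [hS'eq]; exact hρ'irr
  -- lying over θ gives nonzero intertwiner space
  have hLO : Module.finrank ℂ (τ.linHom σ).invariants ≠ 0 := by
    have h := cInner_char σ τ
    rw [← hresχ, ← hτ] at h
    unfold LiesOver at h1
    rw [h] at h1
    exact Nat.cast_ne_zero.mp h1
  have hLO' : Module.finrank ℂ (τ.linHom σ').invariants ≠ 0 := by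
    have h := cInner_char σ' τ
    rw [← hresχ', ← hτ] at h
    unfold LiesOver at h2
    rw [h] at h2
    exact Nat.cast_ne_zero.mp h2
  have hres1 : ∀ nn : ↥N, LinearMap.trace ℂ _ (σ nn) = LinearMap.trace ℂ _ (τ nn) :=
    trace_eq_of_hom σ τ hσirr hτirr hLO
  have hres1' : ∀ nn : ↥N, LinearMap.trace ℂ _ (σ' nn) = LinearMap.trace ℂ _ (τ nn) :=
    trace_eq_of_hom σ' τ hσ'irr hτirr hLO'
  have hχN : ∀ nn : ↥N, χ ↑nn = θ nn := by
    intro nn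
    rw [hρ, hτ]
    exact hres1 nn
  have hχ'N : ∀ nn : ↥N, χ' ↑nn = θ nn := by
    intro nn
    rw [hρ', hτ]
    exact hres1' nn
  have hχ'1 : χ' 1 = χ 1 := by
    have e1 := hχN 1
    have e2 := hχ'N 1
    simp only [OneMemClass.coe_one] at e1 e2
    rw [e1, e2]
  -- the central character ratios
  set ω : G → ℂ := fun z => χ z / χ 1 with hωdef
  set ω' : G → ℂ := fun z => χ' z / χ 1 with hω'def
  have hscalω : ∀ z ∈ Subgroup.center G, ρ z = ω z • LinearMap.id := hscal
  have hscalω' : ∀ z ∈ Subgroup.center G, ρ' z = ω' z • LinearMap.id := by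
    intro z hz
    rw [hscal' z hz, hχ'1]
  have hωmul : ∀ z₁ ∈ Subgroup.center G, ∀ z₂ ∈ Subgroup.center G,
      ω (z₁ * z₂) = ω z₁ * ω z₂ := by
    intro z₁ hz₁ z₂ hz₂
    apply smul_id_inj (V := Fin nχ → ℂ)
    rw [← hscalω _ (mul_mem hz₁ hz₂), map_mul, hscalω _ hz₁, hscalω _ hz₂]
    ext v
    simp [Module.End.mul_apply, smul_smul, mul_comm]
  have hω'mul : ∀ z₁ ∈ Subgroup.center G, ∀ z₂ ∈ Subgroup.center G,
      ω' (z₁ * z₂) = ω' z₁ * ω' z₂ := by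
    intro z₁ hz₁ z₂ hz₂
    apply smul_id_inj (V := Fin nχ' → ℂ)
    rw [← hscalω' _ (mul_mem hz₁ hz₂), map_mul, hscalω' _ hz₁, hscalω' _ hz₂]
    ext v
    simp [Module.End.mul_apply, smul_smul, mul_comm]
  have hω1 : ω 1 = 1 := div_self hχ10
  have hω'1 : ω' 1 = 1 := by
    show χ' 1 / χ 1 = 1
    rw [hχ'1]
    exact div_self hχ10
  have hωne : ∀ z ∈ Subgroup.center G, ω z ≠ 0 := by
    intro z hz h0
    have h := hωmul z hz z⁻¹ (inv_mem hz)
    rw [mul_inv_cancel, hω1, h0, zero_mul] at h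
    exact one_ne_zero h
  have hω'ne : ∀ z ∈ Subgroup.center G, ω' z ≠ 0 := by
    intro z hz h0
    have h := hω'mul z hz z⁻¹ (inv_mem hz)
    rw [mul_inv_cancel, hω'1, h0, zero_mul] at h
    exact one_ne_zero h
  have hωω' : ∀ u, u ∈ N → u ∈ Subgroup.center G → ω u = ω' u := by
    intro u hu hz
    simp only [hωdef, hω'def]
    rw [show χ u = θ ⟨u, hu⟩ from hχN ⟨u, hu⟩, show χ' u = θ ⟨u, hu⟩ from hχ'N ⟨u, hu⟩]
  -- well-definedness of the ratio
  have hW : ∀ u z u' z', u ∈ N → z ∈ Subgroup.center G → u' ∈ N → z' ∈ Subgroup.center G →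
      u * z = u' * z' → ω' z * (ω z)⁻¹ = ω' z' * (ω z')⁻¹ := by
    intro u z u' z' hu hz hu' hz' heq
    have hzz' : z * z'⁻¹ = u⁻¹ * u' := by
      have h2 : u * (z * z'⁻¹) = u' := by
        rw [← mul_assoc, heq, mul_assoc, mul_inv_cancel, mul_one]
      have h3 : u * (u⁻¹ * u') = u' := by rw [← mul_assoc, mul_inv_cancel, one_mul]
      exact mul_left_cancel (h2.trans h3.symm)
    have humem : z * z'⁻¹ ∈ N := hzz' ▸ mul_mem (inv_mem hu) hu'
    have hcmem : z * z'⁻¹ ∈ Subgroup.center G := mul_mem hz (inv_mem hz')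
    have hz'dec : z = (z * z'⁻¹) * z' := by rw [mul_assoc, inv_mul_cancel, mul_one]
    have e1 : ω z = ω (z * z'⁻¹) * ω z' := by
      conv_lhs => rw [hz'dec]
      exact hωmul _ hcmem _ hz'
    have e2 : ω' z = ω' (z * z'⁻¹) * ω' z' := by
      conv_lhs => rw [hz'dec]
      exact hω'mul _ hcmem _ hz'
    rw [e1, e2, ← hωω' _ humem hcmem]
    have h0 : ω (z * z'⁻¹) ≠ 0 := hωne _ hcmem
    rw [mul_inv]
    have hre : ω (z * z'⁻¹) * ω' z' * ((ω (z * z'⁻¹))⁻¹ * (ω z')⁻¹)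
        = (ω (z * z'⁻¹) * (ω (z * z'⁻¹))⁻¹) * (ω' z' * (ω z')⁻¹) := by ring
    rw [hre, mul_inv_cancel₀ h0, one_mul]
  -- construct β
  have hsel : ∀ g : G, ∃ uz : G × G, uz.1 ∈ N ∧ uz.2 ∈ Subgroup.center G ∧ g = uz.1 * uz.2 := by
    intro g
    obtain ⟨u, hu, z, hz, hg⟩ := hGZ g
    exact ⟨(u, z), hu, hz, hg⟩
  set β₀ : G → ℂ := fun g =>
    ω' (Classical.choose (hsel g)).2 * (ω (Classical.choose (hsel g)).2)⁻¹ with hβ₀def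
  have hβval : ∀ (g u z : G), u ∈ N → z ∈ Subgroup.center G → g = u * z →
      β₀ g = ω' z * (ω z)⁻¹ := by
    intro g u z hu hz hg
    obtain ⟨h1s, h2s, h3s⟩ := Classical.choose_spec (hsel g)
    exact hW _ _ _ _ h1s h2s hu hz (by rw [← h3s, ← hg])
  have hβ1 : β₀ 1 = 1 := by
    rw [hβval 1 1 1 (one_mem N) (one_mem _) (one_mul 1).symm, hω1, hω'1]
    try simp
  have hβmul : ∀ a b : G, β₀ (a * b) = β₀ a * β₀ b := by
    intro a b
    obtain ⟨ua, hua, za, hza, hae⟩ := hGZ a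
    obtain ⟨ub, hub, zb, hzb, hbe⟩ := hGZ b
    have hc : ub * za = za * ub := Subgroup.mem_center_iff.mp hza ub
    have habe : a * b = (ua * ub) * (za * zb) := by
      rw [hae, hbe]
      have hmid : za * (ub * zb) = ub * (za * zb) := by rw [← mul_assoc, ← hc, mul_assoc]
      rw [mul_assoc ua za, hmid, ← mul_assoc]
    rw [hβval (a * b) _ _ (mul_mem hua hub) (mul_mem hza hzb) habe,
        hβval a ua za hua hza hae, hβval b ub zb hub hzb hbe,
        hωmul _ hza _ hzb, hω'mul _ hza _ hzb]
    rw [mul_inv]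
    ring
  refine ⟨{ toFun := β₀, map_one' := hβ1, map_mul' := hβmul }, ?_, ?_⟩
  · intro u hu
    show β₀ u = 1
    rw [hβval u u 1 hu (one_mem _) (mul_one u).symm, hω1, hω'1]
    try simp
  · funext g
    show χ' g = χ g * β₀ g
    obtain ⟨u, hu, z, hz, hge⟩ := hGZ g
    have hβg := hβval g u z hu hz hge
    have hχg : χ g = ω z * θ ⟨u, hu⟩ := by
      rw [hge, hρ]
      simp only
      have hmz : ρ (u * z) = ω z • ρ u := by
        rw [map_mul, hscalω z hz, mul_smul_comm]
        congr 1
        try (ext v; simp)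
      rw [hmz, map_smul, smul_eq_mul]
      congr 1
      have h5 := hχN ⟨u, hu⟩
      rw [hρ] at h5
      exact h5
    have hχ'g : χ' g = ω' z * θ ⟨u, hu⟩ := by
      rw [hge, hρ']
      simp only
      have hmz : ρ' (u * z) = ω' z • ρ' u := by
        rw [map_mul, hscalω' z hz, mul_smul_comm]
        congr 1
        try (ext v; simp)
      rw [hmz, map_smul, smul_eq_mul]
      congr 1
      have h5 := hχ'N ⟨u, hu⟩
      rw [hρ'] at h5
      exact h5
    rw [hχg, hχ'g, hβg]
    have h0 : ω z ≠ 0 := hωne z hz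
    have hre : (ω z * θ ⟨u, hu⟩) * (ω' z * (ω z)⁻¹)
        = (ω z * (ω z)⁻¹) * (ω' z * θ ⟨u, hu⟩) := by ring
    rw [hre, mul_inv_cancel₀ h0, one_mul]


end CT
end
end

section
/- Let N be a normal subgroup of a finite group G with G/N cyclic, and let θ ∈ Irr(N) be G-invariant. Then θ extends to G, i.e., there exists χ ∈ Irr(G) whose restriction to N equals θ. -/
open scoped Classical Pointwise

noncomputable section

namespace CT

open LinearMap Module

lemma pow_mod_eq {M : Type*} [Monoid M] {x : M} {k : ℕ} (hx : x ^ k = 1) (a : ℕ) :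
    x ^ (a % k) = x ^ a := by
  conv_rhs => rw [← Nat.div_add_mod a k]
  rw [pow_add, pow_mul, hx, one_pow, one_mul]

lemma fz_add {M : Type*} [Monoid M] {k : ℕ} [NeZero k] {x : M} (hx : x ^ k = 1)
    (i j : ZMod k) : x ^ (i + j).val = x ^ i.val * x ^ j.val := by
  rw [ZMod.val_add, pow_mod_eq hx, pow_add]

/-- Key linear algebra fact: if `A` has finite order then the trace of its inverse is the
complex conjugate of its trace. -/
lemma trace_inv_eq_conj_trace {V : Type*} [AddCommGroup V] [Module ℂ V]
    [FiniteDimensional ℂ V] {k : ℕ} (hk : 0 < k) (A B : Module.End ℂ V)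
    (hA : A ^ k = 1) (hAB : A * B = 1) :
    LinearMap.trace ℂ V B = starRingEnd ℂ (LinearMap.trace ℂ V A) := by
  haveI : NeZero k := ⟨hk.ne'⟩
  set ζ : ℂ := Complex.exp (2 * Real.pi * Complex.I / k) with hζdef
  have hζ : IsPrimitiveRoot ζ k := Complex.isPrimitiveRoot_exp k hk.ne'
  have hζk : ζ ^ k = 1 := hζ.pow_eq_one
  set c : ZMod k → ℂ := fun i => ζ ^ i.val with hcdef
  set Ap : ZMod k → Module.End ℂ V := fun i => A ^ i.val with hApdef
  have hc : ∀ i j : ZMod k, c (i + j) = c i * c j := fun i j => fz_add hζk i j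
  have hApm : ∀ i j : ZMod k, Ap (i + j) = Ap i * Ap j := fun i j => fz_add hA i j
  have hc0 : c 0 = 1 := by simp [hcdef]
  have hAp0 : Ap 0 = 1 := by simp [hApdef]
  have hcne : ∀ i : ZMod k, c i ≠ 0 := by
    intro i
    simp only [hcdef]
    exact pow_ne_zero _ (hζ.ne_zero hk.ne')
  have hcinv : ∀ i : ZMod k, c (-i) * c i = 1 := by
    intro i; rw [← hc, neg_add_cancel, hc0]
  have hcconj : ∀ i : ZMod k, starRingEnd ℂ (c i) = c (-i) := by
    intro i
    have hck : (c i) ^ k = 1 := by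
      simp only [hcdef]
      rw [← pow_mul, mul_comm, pow_mul, hζk, one_pow]
    have h1 : (Complex.normSq (c i) : ℝ) ^ k = 1 := by
      have := congrArg Complex.normSq hck
      rwa [map_pow, map_one] at this
    have hnn : 0 ≤ Complex.normSq (c i) := Complex.normSq_nonneg _
    have hns : Complex.normSq (c i) = 1 := by
      rcases lt_trichotomy (Complex.normSq (c i)) 1 with h | h | h
      · have := pow_lt_one₀ hnn h hk.ne'; linarith
      · exact h
      · have := one_lt_pow₀ h hk.ne'; linarith
    have h2 : starRingEnd ℂ (c i) * c i = 1 := by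
      rw [mul_comm, Complex.mul_conj, hns, Complex.ofReal_one]
    exact mul_right_cancel₀ (hcne i) (h2.trans (hcinv i).symm)
  have hS : ∀ t : ZMod k, ∑ j : ZMod k, c (j * t) = if t = 0 then (k : ℂ) else 0 := by
    intro t
    by_cases ht : t = 0
    · subst ht
      simp [hc0, ZMod.card]
    · rw [if_neg ht]
      have hr1 : c t ≠ 1 := by
        have hvpos : 0 < t.val := ZMod.val_pos.mpr ht
        have hvlt : t.val < k := ZMod.val_lt t
        simpa [hcdef] using hζ.pow_ne_one_of_pos_of_lt hvpos.ne' hvlt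
      have htel : c t * ∑ j : ZMod k, c (j * t) = ∑ j : ZMod k, c (j * t) := by
        rw [Finset.mul_sum]
        calc ∑ j : ZMod k, c t * c (j * t) = ∑ j : ZMod k, c ((j + 1) * t) := by
              refine Finset.sum_congr rfl fun j _ => ?_
              rw [add_mul, one_mul, hc, mul_comm]
          _ = ∑ j : ZMod k, c (j * t) :=
              Fintype.sum_equiv (Equiv.addRight 1) _ _ (fun j => rfl)
      have hz : (c t - 1) * ∑ j : ZMod k, c (j * t) = 0 := by
        rw [sub_mul, one_mul, htel, sub_self]
      rcases mul_eq_zero.mp hz with h | h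
      · exact absurd (sub_eq_zero.mp h) hr1
      · exact h
  set P : ZMod k → Module.End ℂ V := fun j => (k : ℂ)⁻¹ • ∑ i : ZMod k, c (-(j * i)) • Ap i
    with hPdef
  have hkc : (k : ℂ) ≠ 0 := Nat.cast_ne_zero.mpr hk.ne'
  have hPsum : ∑ j : ZMod k, P j = 1 := by
    simp only [hPdef]
    rw [← Finset.smul_sum, Finset.sum_comm]
    have h2 : ∀ i : ZMod k, ∑ j : ZMod k, c (-(j * i)) • Ap i
        = (if i = 0 then (k : ℂ) else 0) • Ap i := by
      intro i
      rw [← Finset.sum_smul]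
      congr 1
      have : ∀ j : ZMod k, c (-(j * i)) = c (j * (-i)) := fun j => by rw [mul_neg]
      rw [Finset.sum_congr rfl (fun j _ => this j), hS]
      simp [neg_eq_zero]
    rw [Finset.sum_congr rfl (fun i _ => h2 i)]
    have h3 : ∀ i : ZMod k, (if i = 0 then (k : ℂ) else 0) • Ap i
        = if i = 0 then (k : ℂ) • Ap i else 0 := by
      intro i; split <;> simp
    rw [Finset.sum_congr rfl (fun i _ => h3 i), Finset.sum_ite_eq' Finset.univ (0 : ZMod k)]
    simp [hAp0, smul_smul, inv_mul_cancel₀ hkc]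
  have hAP : ∀ s j : ZMod k, Ap s * P j = c (j * s) • P j := by
    intro s j
    have hre : ∑ i : ZMod k, Ap s * (c (-(j * i)) • Ap i)
        = ∑ i : ZMod k, c (j * s) • (c (-(j * i)) • Ap i) := by
      refine Fintype.sum_equiv (Equiv.addLeft s) _ _ fun x => ?_
      show Ap s * (c (-(j * x)) • Ap x) = c (j * s) • (c (-(j * (s + x))) • Ap (s + x))
      rw [mul_smul_comm, ← hApm, smul_smul]
      congr 1
      rw [← hc]
      congr 1
      ring
    calc Ap s * P j = (k : ℂ)⁻¹ • ∑ i : ZMod k, Ap s * (c (-(j * i)) • Ap i) := by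
          simp only [hPdef, mul_smul_comm, Finset.mul_sum]
      _ = (k : ℂ)⁻¹ • ∑ i : ZMod k, c (j * s) • (c (-(j * i)) • Ap i) := by rw [hre]
      _ = c (j * s) • P j := by
          rw [← Finset.smul_sum, smul_comm]
  have hA1 : Ap 1 = A := by
    have hv : (1 : ZMod k).val = 1 % k := by rw [← Nat.cast_one, ZMod.val_natCast]
    simp only [hApdef, hv, pow_mod_eq hA, pow_one]
  have hBm : B = Ap (-1) := by
    have hleft : Ap (-1) * A = 1 := by rw [← hA1, ← hApm, neg_add_cancel, hAp0]
    calc B = (Ap (-1) * A) * B := by rw [hleft, one_mul]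
      _ = Ap (-1) * (A * B) := by rw [mul_assoc]
      _ = Ap (-1) := by rw [hAB, mul_one]
  have hPidem : ∀ j : ZMod k, P j * P j = P j := by
    intro j
    have : P j * P j = (k : ℂ)⁻¹ • ∑ i : ZMod k, c (-(j * i)) • (Ap i * P j) := by
      conv_lhs => rw [hPdef]
      simp only [smul_mul_assoc, Finset.sum_mul]
      rfl
    rw [this]
    have h4 : ∀ i : ZMod k, c (-(j * i)) • (Ap i * P j) = P j := by
      intro i
      rw [hAP, smul_smul, ← hc, neg_add_cancel, hc0, one_smul]
    rw [Finset.sum_congr rfl (fun i _ => h4 i), Finset.sum_const, Finset.card_univ, ZMod.card]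
    rw [← Nat.cast_smul_eq_nsmul ℂ, smul_smul, inv_mul_cancel₀ hkc, one_smul]
  have hPproj : ∀ j : ZMod k, LinearMap.IsProj (LinearMap.range (P j)) (P j) := by
    intro j
    constructor
    · intro x; exact LinearMap.mem_range_self _ x
    · rintro x ⟨y, rfl⟩
      exact congrArg (fun f : Module.End ℂ V => f y) (hPidem j)
  have htrP : ∀ j : ZMod k, LinearMap.trace ℂ V (P j)
      = ((finrank ℂ (LinearMap.range (P j)) : ℕ) : ℂ) := fun j => (hPproj j).trace
  have hdecomp : ∀ C : Module.End ℂ V, C = ∑ j : ZMod k, C * P j := by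
    intro C
    rw [← Finset.mul_sum, hPsum, mul_one]
  have htrA : LinearMap.trace ℂ V A
      = ∑ j : ZMod k, c j * ((finrank ℂ (LinearMap.range (P j)) : ℕ) : ℂ) := by
    conv_lhs => rw [hdecomp A]
    rw [map_sum]
    refine Finset.sum_congr rfl fun j _ => ?_
    rw [← hA1, hAP, mul_one, LinearMap.map_smul, htrP, smul_eq_mul]
  have htrB : LinearMap.trace ℂ V B
      = ∑ j : ZMod k, c (-j) * ((finrank ℂ (LinearMap.range (P j)) : ℕ) : ℂ) := by
    conv_lhs => rw [hdecomp B]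
    rw [map_sum]
    refine Finset.sum_congr rfl fun j _ => ?_
    rw [hBm, hAP, mul_neg_one, LinearMap.map_smul, htrP, smul_eq_mul]
  rw [htrA, htrB, map_sum]
  refine Finset.sum_congr rfl fun j _ => ?_
  rw [map_mul, hcconj, map_natCast]

end CT
namespace CT

open LinearMap Module Representation

variable {H : Type*} [Group H] [Fintype H]
variable {V : Type*} [AddCommGroup V] [Module ℂ V] [FiniteDimensional ℂ V]
variable {W : Type*} [AddCommGroup W] [Module ℂ W] [FiniteDimensional ℂ W]

/-- The character of an abstract representation. -/
def charF (ρ : Representation ℂ H V) : H → ℂ := fun g => LinearMap.trace ℂ V (ρ g)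

lemma charF_inv (ρ : Representation ℂ H V) (x : H) :
    charF ρ x⁻¹ = starRingEnd ℂ (charF ρ x) := by
  refine trace_inv_eq_conj_trace (k := Fintype.card H) Fintype.card_pos (ρ x) (ρ x⁻¹) ?_ ?_
  · rw [← map_pow, pow_card_eq_one, map_one]
  · show ρ x * ρ x⁻¹ = 1
    have h : x * x⁻¹ = 1 := mul_inv_cancel x
    rw [← map_mul, h, map_one]

lemma mem_invariants_linHom_iff (σ : Representation ℂ H W) (ρ : Representation ℂ H V)
    (f : W →ₗ[ℂ] V) :
    f ∈ (σ.linHom ρ).invariants ↔ ∀ g : H, ρ g ∘ₗ f = f ∘ₗ σ g := by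
  rw [Representation.mem_invariants]
  constructor
  · intro h g
    ext x
    have := congrArg (fun F : W →ₗ[ℂ] V => F (σ g x)) (h g)
    simp only [Representation.linHom_apply, LinearMap.comp_apply] at this ⊢
    rw [← this]
    have h2 : (σ g⁻¹) ((σ g) x) = x := by
      rw [← Module.End.mul_apply, ← map_mul, inv_mul_cancel, map_one, Module.End.one_apply]
    rw [h2]
  · intro h g
    ext x
    simp only [Representation.linHom_apply, LinearMap.comp_apply]
    have := congrArg (fun F : W →ₗ[ℂ] V => F (σ g⁻¹ x)) (h g)
    simp only [LinearMap.comp_apply] at this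
    rw [this]
    have h2 : (σ g) ((σ g⁻¹) x) = x := by
      rw [← Module.End.mul_apply, ← map_mul, mul_inv_cancel, map_one, Module.End.one_apply]
    rw [h2]

lemma trace_linHom_apply (σ : Representation ℂ H W) (ρ : Representation ℂ H V) (x : H) :
    LinearMap.trace ℂ (W →ₗ[ℂ] V) ((σ.linHom ρ) x) = charF ρ x * charF σ x⁻¹ := by
  have hcomm := Representation.dualTensorHom_comm σ ρ x
  have hconj : (σ.linHom ρ) x
      = (dualTensorHomEquiv ℂ W V).conj (TensorProduct.map (σ.dual x) (ρ x)) := by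
    rw [LinearEquiv.conj_apply]
    have hcoe : (dualTensorHomEquiv ℂ W V).toLinearMap = dualTensorHom ℂ W V := rfl
    rw [hcoe, hcomm]
    refine LinearMap.ext fun f => ?_
    simp only [LinearMap.comp_apply, LinearEquiv.coe_coe]
    exact congrArg ((σ.linHom ρ) x) ((dualTensorHomEquiv ℂ W V).apply_symm_apply f).symm
  rw [hconj, LinearMap.trace_conj', LinearMap.trace_tensorProduct']
  rw [Representation.dual_apply, LinearMap.trace_transpose']
  rw [mul_comm]
  rfl

lemma cInner_charF_eq_finrank (ρ : Representation ℂ H V) (σ : Representation ℂ H W) :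
    cInner H (charF ρ) (charF σ)
      = ((finrank ℂ ((σ.linHom ρ).invariants) : ℕ) : ℂ) := by
  haveI : Invertible ((Fintype.card H : ℂ)) :=
    invertibleOfNonzero (Nat.cast_ne_zero.mpr Fintype.card_ne_zero)
  have h1 : cInner H (charF ρ) (charF σ)
      = (Fintype.card H : ℂ)⁻¹ * ∑ x : H, LinearMap.trace ℂ (W →ₗ[ℂ] V) ((σ.linHom ρ) x) := by
    rw [cInner]
    congr 1
    refine Finset.sum_congr rfl fun x _ => ?_
    rw [trace_linHom_apply, ← charF_inv]
  rw [h1]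
  have h2 : LinearMap.trace ℂ (W →ₗ[ℂ] V) ((σ.linHom ρ).averageMap)
      = ((finrank ℂ ((σ.linHom ρ).invariants) : ℕ) : ℂ) :=
    (Representation.isProj_averageMap (σ.linHom ρ)).trace
  rw [← h2]
  rw [Representation.averageMap, GroupAlgebra.average, map_smul, map_sum, LinearMap.map_smul,
    map_sum]
  rw [invOf_eq_inv ((Fintype.card H : ℂ)), smul_eq_mul]
  congr 1
  refine Finset.sum_congr rfl fun x _ => ?_
  rw [MonoidAlgebra.of_apply, Representation.asAlgebraHom_single, one_smul]

end CT
namespace CT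

open LinearMap Module Representation

variable {H : Type*} [Group H] [Fintype H]
variable {V : Type*} [AddCommGroup V] [Module ℂ V] [FiniteDimensional ℂ V]
variable {W : Type*} [AddCommGroup W] [Module ℂ W] [FiniteDimensional ℂ W]

/-- Irreducibility of an abstract representation. -/
def IrrRep (ρ : Representation ℂ H V) : Prop :=
  Nontrivial V ∧ ∀ p : Submodule ℂ V, (∀ g : H, ∀ x ∈ p, ρ g x ∈ p) → p = ⊥ ∨ p = ⊤

omit [Fintype H] in
lemma schur_endo (ρ : Representation ℂ H V) (hirr : IrrRep ρ) (A : Module.End ℂ V)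
    (hcomm : ∀ g : H, A * ρ g = ρ g * A) : ∃ c : ℂ, A = c • (1 : Module.End ℂ V) := by
  haveI := hirr.1
  obtain ⟨c, hc⟩ := Module.End.exists_eigenvalue A
  refine ⟨c, ?_⟩
  set K := LinearMap.ker (A - c • (1 : Module.End ℂ V)) with hK
  have hcomm' : ∀ g : H, (A - c • 1) * ρ g = ρ g * (A - c • 1) := by
    intro g
    rw [sub_mul, mul_sub, hcomm g]
    congr 1
    rw [smul_mul_assoc, one_mul, mul_smul_comm, mul_one]
  have hKinv : ∀ g : H, ∀ x ∈ K, ρ g x ∈ K := by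
    intro g x hx
    have hx0 : (A - c • (1 : Module.End ℂ V)) x = 0 := hx
    show (A - c • (1 : Module.End ℂ V)) (ρ g x) = 0
    calc (A - c • (1 : Module.End ℂ V)) (ρ g x)
        = ((A - c • 1) * ρ g) x := rfl
      _ = (ρ g * (A - c • 1)) x := by rw [hcomm' g]
      _ = ρ g ((A - c • (1 : Module.End ℂ V)) x) := rfl
      _ = 0 := by rw [hx0, map_zero]
  have hKne : K ≠ ⊥ := by
    obtain ⟨v, hv⟩ := hc.exists_hasEigenvector
    rw [Submodule.ne_bot_iff]
    refine ⟨v, ?_, hv.right⟩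
    show (A - c • (1 : Module.End ℂ V)) v = 0
    have : A v = c • v := hv.apply_eq_smul
    simp [LinearMap.sub_apply, this]
  rcases hirr.2 K hKinv with h | h
  · exact absurd h hKne
  · have : A - c • (1 : Module.End ℂ V) = 0 := LinearMap.ker_eq_top.mp h
    exact sub_eq_zero.mp this

lemma one_mem_invariants_linHom (ρ : Representation ℂ H V) :
    (1 : Module.End ℂ V) ∈ (ρ.linHom ρ).invariants := by
  rw [mem_invariants_linHom_iff]
  intro g
  show ρ g ∘ₗ LinearMap.id = LinearMap.id ∘ₗ ρ g
  rw [LinearMap.comp_id, LinearMap.id_comp]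

lemma cInner_charF_self_of_irr (ρ : Representation ℂ H V) (hirr : IrrRep ρ) :
    cInner H (charF ρ) (charF ρ) = 1 := by
  haveI := hirr.1
  rw [cInner_charF_eq_finrank]
  have hone : (1 : Module.End ℂ V) ≠ 0 := by
    intro h
    obtain ⟨x, hx⟩ := exists_ne (0 : V)
    have := congrArg (fun f : Module.End ℂ V => f x) h
    simp at this
    exact hx this
  have hspan : (ρ.linHom ρ).invariants = Submodule.span ℂ {(1 : Module.End ℂ V)} := by
    apply le_antisymm
    · intro A hA
      rw [mem_invariants_linHom_iff] at hA
      obtain ⟨c, hc⟩ := schur_endo ρ hirr A (fun g => (hA g).symm)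
      rw [hc]
      exact Submodule.smul_mem _ c (Submodule.mem_span_singleton_self _)
    · rw [Submodule.span_le, Set.singleton_subset_iff]
      exact one_mem_invariants_linHom ρ
  rw [hspan, finrank_span_singleton hone, Nat.cast_one]

lemma irrRep_of_cInner_eq_one (ρ : Representation ℂ H V)
    (h1 : cInner H (charF ρ) (charF ρ) = 1) : IrrRep ρ := by
  rw [cInner_charF_eq_finrank] at h1
  have hfr : finrank ℂ ((ρ.linHom ρ).invariants) = 1 := by exact_mod_cast h1
  have hnt : Nontrivial V := by
    by_contra hV
    rw [not_nontrivial_iff_subsingleton] at hV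
    haveI := hV
    haveI : Subsingleton (V →ₗ[ℂ] V) :=
      ⟨fun a b => LinearMap.ext fun x => Subsingleton.elim _ _⟩
    haveI : Subsingleton ((ρ.linHom ρ).invariants) :=
      ⟨fun a b => Subtype.ext (Subsingleton.elim _ _)⟩
    have := finrank_zero_of_subsingleton (R := ℂ) (M := (ρ.linHom ρ).invariants)
    omega
  refine ⟨hnt, ?_⟩
  intro p hp
  by_contra hcon
  push_neg at hcon
  obtain ⟨hpbot, hptop⟩ := hcon
  obtain ⟨q, hq⟩ := Submodule.exists_isCompl p
  set π0 : V →ₗ[ℂ] V := p.subtype ∘ₗ (p.projectionOnto q hq) with hπ0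
  set π : V →ₗ[ℂ] V := (Fintype.card H : ℂ)⁻¹ • ∑ h : H, (ρ h) ∘ₗ π0 ∘ₗ (ρ h⁻¹) with hπ
  have hπ0_mem : ∀ x : V, π0 x ∈ p := fun x => (p.projectionOnto q hq x).2
  have hπ0_id : ∀ x ∈ p, π0 x = x := by
    intro x hx
    have := Submodule.linearProjOfIsCompl_apply_left hq ⟨x, hx⟩
    simp only [hπ0, LinearMap.comp_apply]
    rw [this]
    rfl
  have happ : ∀ x : V, π x = (Fintype.card H : ℂ)⁻¹ • ∑ h : H, ρ h (π0 (ρ h⁻¹ x)) := by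
    intro x
    simp [hπ, LinearMap.sum_apply, LinearMap.comp_apply]
  have hπmem : ∀ x : V, π x ∈ p := by
    intro x
    rw [happ]
    refine Submodule.smul_mem _ _ (Submodule.sum_mem _ fun h _ => ?_)
    exact hp h _ (hπ0_mem _)
  have hcard : (Fintype.card H : ℂ) ≠ 0 := Nat.cast_ne_zero.mpr Fintype.card_ne_zero
  have hπ_id : ∀ x ∈ p, π x = x := by
    intro x hx
    rw [happ]
    have hterm : ∀ h : H, ρ h (π0 (ρ h⁻¹ x)) = x := by
      intro h
      rw [hπ0_id _ (hp h⁻¹ x hx), ← Module.End.mul_apply, ← map_mul, mul_inv_cancel, map_one,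
        Module.End.one_apply]
    rw [Finset.sum_congr rfl (fun h _ => hterm h), Finset.sum_const, Finset.card_univ,
      ← Nat.cast_smul_eq_nsmul ℂ, smul_smul, inv_mul_cancel₀ hcard, one_smul]
  have hπ_equiv : π ∈ (ρ.linHom ρ).invariants := by
    rw [mem_invariants_linHom_iff]
    intro g
    ext x
    simp only [LinearMap.comp_apply]
    rw [happ, happ (ρ g x), map_smul]
    congr 1
    rw [map_sum]
    refine Fintype.sum_equiv (Equiv.mulLeft g) _ _ fun h => ?_
    show ρ g (ρ h (π0 (ρ h⁻¹ x))) = ρ (g * h) (π0 (ρ (g * h)⁻¹ (ρ g x)))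
    have h1 : ρ (g * h)⁻¹ (ρ g x) = ρ h⁻¹ x := by
      rw [← Module.End.mul_apply, ← map_mul]
      congr 2
      group
    rw [h1, ← Module.End.mul_apply, ← map_mul]
  obtain ⟨x0, hx0mem, hx0ne⟩ := (Submodule.ne_bot_iff p).mp hpbot
  obtain ⟨y0, hy0⟩ : ∃ y0 : V, y0 ∉ p := by
    by_contra hall
    push_neg at hall
    exact hptop (Submodule.eq_top_iff'.mpr hall)
  set I := (ρ.linHom ρ).invariants
  have hli : LinearIndependent ℂ
      ![(⟨1, one_mem_invariants_linHom ρ⟩ : I), ⟨π, hπ_equiv⟩] := by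
    rw [LinearIndependent.pair_iff]
    intro s t hst
    have hend : s • (1 : Module.End ℂ V) + t • π = 0 := by
      have := congrArg Subtype.val hst
      simpa using this
    have h1 := congrArg (fun f : Module.End ℂ V => f x0) hend
    simp only [LinearMap.add_apply, LinearMap.smul_apply, Module.End.one_apply,
      LinearMap.zero_apply] at h1
    rw [hπ_id x0 hx0mem] at h1
    have hsum : s + t = 0 := by
      have h2 : (s + t) • x0 = 0 := by rw [add_smul]; exact h1
      rcases smul_eq_zero.mp h2 with h | h
      · exact h
      · exact absurd h hx0ne
    have h3 := congrArg (fun f : Module.End ℂ V => f y0) hend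
    simp only [LinearMap.add_apply, LinearMap.smul_apply, Module.End.one_apply,
      LinearMap.zero_apply] at h3
    have hs : s = 0 := by
      by_contra hs
      have hy0' : y0 = -(s⁻¹ * t) • π y0 := by
        have : s • y0 = -(t • π y0) := eq_neg_of_add_eq_zero_left h3
        calc y0 = s⁻¹ • s • y0 := by rw [smul_smul, inv_mul_cancel₀ hs, one_smul]
          _ = -(s⁻¹ * t) • π y0 := by rw [this, smul_neg, smul_smul, neg_smul]
      have : y0 ∈ p := by
        rw [hy0']
        exact Submodule.smul_mem _ _ (hπmem y0)
      exact hy0 this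
    refine ⟨hs, ?_⟩
    rw [hs, zero_add] at hsum
    exact hsum
  have h2 : 2 ≤ finrank ℂ I := by
    have := hli.fintype_card_le_finrank
    simpa using this
  omega

lemma exists_equiv_of_charF_eq (ρ : Representation ℂ H V) (σ : Representation ℂ H W)
    (hρ : IrrRep ρ) (hσ : IrrRep σ) (hch : charF ρ = charF σ) :
    ∃ T : W ≃ₗ[ℂ] V, ∀ g : H, (T : W →ₗ[ℂ] V) ∘ₗ σ g = ρ g ∘ₗ (T : W →ₗ[ℂ] V) := by
  have h1 : cInner H (charF ρ) (charF σ) = 1 := by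
    rw [hch]
    exact cInner_charF_self_of_irr σ hσ
  rw [cInner_charF_eq_finrank] at h1
  have hfr : finrank ℂ ((σ.linHom ρ).invariants) = 1 := by exact_mod_cast h1
  have hne : (σ.linHom ρ).invariants ≠ ⊥ := by
    intro h
    rw [h] at hfr
    simp [finrank_bot] at hfr
  obtain ⟨f, hfmem, hfne⟩ := (Submodule.ne_bot_iff _).mp hne
  rw [mem_invariants_linHom_iff] at hfmem
  have hfapp : ∀ (g : H) (x : W), ρ g (f x) = f (σ g x) := by
    intro g x
    exact congrArg (fun F : W →ₗ[ℂ] V => F x) (hfmem g)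
  have hkinv : ∀ (g : H), ∀ x ∈ LinearMap.ker f, σ g x ∈ LinearMap.ker f := by
    intro g x hx
    show f (σ g x) = 0
    rw [← hfapp]
    have hx0 : f x = 0 := hx
    rw [hx0, map_zero]
  have hker : LinearMap.ker f = ⊥ := by
    rcases hσ.2 (LinearMap.ker f) hkinv with h | h
    · exact h
    · exact absurd (LinearMap.ker_eq_top.mp h) hfne
  have hrinv : ∀ (g : H), ∀ x ∈ LinearMap.range f, ρ g x ∈ LinearMap.range f := by
    intro g x hx
    obtain ⟨y, rfl⟩ := hx
    exact ⟨σ g y, (hfapp g y).symm⟩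
  have hrange : LinearMap.range f = ⊤ := by
    rcases hρ.2 (LinearMap.range f) hrinv with h | h
    · exact absurd (LinearMap.range_eq_bot.mp h) hfne
    · exact h
  refine ⟨LinearEquiv.ofBijective f ⟨LinearMap.ker_eq_bot.mp hker,
    LinearMap.range_eq_top.mp hrange⟩, fun g => ?_⟩
  exact (hfmem g).symm

end CT
namespace CT

open LinearMap Module Representation

set_option maxHeartbeats 2000000 in
/-- Isaacs, Corollary 11.22. If `N ⊴ G` with `G/N` cyclic and
`θ ∈ Irr(N)` is `G`-invariant, then `θ` extends to `G`. -/
theorem stmt13 {G : Type*} [Group G] [Fintype G] (N : Subgroup G) [N.Normal]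
    (hcyc : IsCyclic (G ⧸ N))
    (θ : N → ℂ) (hθ : IsIrr N θ)
    (hinv : ∀ g : G, conjFun N g θ = θ) :
    ∃ χ : G → ℂ, IsIrr G χ ∧ res N χ = θ := by
  classical
  obtain ⟨⟨d, ρ0, hρ0⟩, hnorm⟩ := hθ
  have hθeq : θ = charF ρ0 := hρ0
  have hirr0 : IrrRep ρ0 := irrRep_of_cInner_eq_one ρ0 (by rw [← hθeq]; exact hnorm)
  haveI hntV : Nontrivial (Fin d → ℂ) := hirr0.1
  have hone : (1 : Module.End ℂ (Fin d → ℂ)) ≠ 0 := by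
    intro h
    obtain ⟨x, hx⟩ := exists_ne (0 : Fin d → ℂ)
    have := congrArg (fun f : Module.End ℂ (Fin d → ℂ) => f x) h
    simp at this
    exact hx this
  haveI : Fintype (G ⧸ N) := Fintype.ofFinite _
  -- a generator of the cyclic quotient and a lift of it
  obtain ⟨gbar, hgbar⟩ := hcyc.exists_generator
  obtain ⟨g, rfl⟩ := QuotientGroup.mk_surjective gbar
  set m : ℕ := orderOf ((g : G ⧸ N)) with hm
  have hmpos : 0 < m := orderOf_pos _
  have hmem : ∀ t : ℤ, g ^ t ∈ N ↔ (m : ℤ) ∣ t := by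
    intro t
    rw [← QuotientGroup.eq_one_iff, QuotientGroup.mk_zpow, ← orderOf_dvd_iff_zpow_eq_one, hm]
  have hexists : ∀ x : G, ∃ t : ℤ, x * (g ^ t)⁻¹ ∈ N := by
    intro x
    obtain ⟨t, ht⟩ := Subgroup.mem_zpowers_iff.mp (hgbar ((x : G ⧸ N)))
    refine ⟨t, ?_⟩
    rw [← QuotientGroup.eq_one_iff]
    have h1 : ((x * (g ^ t)⁻¹ : G) : G ⧸ N)
        = (x : G ⧸ N) * (((g : G ⧸ N)) ^ t)⁻¹ := by
      rw [QuotientGroup.mk_mul, QuotientGroup.mk_inv, QuotientGroup.mk_zpow]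
    rw [h1, ht, mul_inv_cancel]
  -- the conjugate representation
  set φ : N →* N := (MulAut.conjNormal g : MulAut N).toMonoidHom with hφ
  have hφ_apply : ∀ n : N, ((φ n : N) : G) = g * n * g⁻¹ := fun n =>
    MulAut.conjNormal_apply g n
  set ρg : Representation ℂ N (Fin d → ℂ) := ρ0.comp φ with hρg
  have hchg : charF ρg = charF ρ0 := by
    funext n
    have h1 := congrFun (hinv g) n
    rw [conjFun_apply] at h1
    have h2 : charF ρg n = θ (φ n) := by rw [hθeq]; rfl
    have h3 : φ n = ⟨g * (n : G) * g⁻¹, Subgroup.Normal.conj_mem ‹N.Normal› _ n.2 g⟩ :=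
      Subtype.ext (hφ_apply n)
    rw [← hθeq, h2, h3]
    exact h1
  have hirrg : IrrRep ρg := by
    refine ⟨hntV, fun p hp => hirr0.2 p ?_⟩
    intro n x hx
    have h1 := hp ((MulAut.conjNormal g : MulAut N).symm n) x hx
    have h2 : φ ((MulAut.conjNormal g : MulAut N).symm n) = n :=
      (MulAut.conjNormal g : MulAut N).apply_symm_apply n
    have h3 : ρg ((MulAut.conjNormal g : MulAut N).symm n) = ρ0 n := by
      show ρ0 (φ _) = ρ0 n
      rw [h2]
    rwa [h3] at h1
  -- the intertwiner T as a unit of the endomorphism algebra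
  obtain ⟨T, hT⟩ := exists_equiv_of_charF_eq ρg ρ0 hirrg hirr0 hchg
  set ρu : N →* (Module.End ℂ (Fin d → ℂ))ˣ := Representation.asGroupHom ρ0 with hρu
  have hρu_val : ∀ n : N, ((ρu n : (Module.End ℂ (Fin d → ℂ))ˣ) : Module.End ℂ (Fin d → ℂ))
      = ρ0 n := fun n => Representation.asGroupHom_apply ρ0 n
  set Tu : (Module.End ℂ (Fin d → ℂ))ˣ :=
    { val := T.toLinearMap
      inv := T.symm.toLinearMap
      val_inv := LinearMap.ext fun x => T.apply_symm_apply x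
      inv_val := LinearMap.ext fun x => T.symm_apply_apply x } with hTudef
  have hTuu : ∀ n : N, Tu * ρu n = ρu (φ n) * Tu := by
    intro n
    apply Units.ext
    rw [Units.val_mul, Units.val_mul, hρu_val, hρu_val]
    exact hT n
  have hconjinv : ∀ n : N, φ ((MulAut.conjNormal g⁻¹ : MulAut N) n) = n := by
    intro n
    apply Subtype.ext
    rw [hφ_apply, MulAut.conjNormal_apply]
    group
  have hTuinv : ∀ n : N, Tu⁻¹ * ρu n = ρu ((MulAut.conjNormal g⁻¹ : MulAut N) n) * Tu⁻¹ := by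
    intro n
    have key : ρu n * Tu = Tu * ρu ((MulAut.conjNormal g⁻¹ : MulAut N) n) := by
      conv_lhs => rw [← hconjinv n]
      exact (hTuu _).symm
    calc Tu⁻¹ * ρu n = Tu⁻¹ * (ρu n * Tu) * Tu⁻¹ := by group
      _ = Tu⁻¹ * (Tu * ρu ((MulAut.conjNormal g⁻¹ : MulAut N) n)) * Tu⁻¹ := by rw [key]
      _ = ρu ((MulAut.conjNormal g⁻¹ : MulAut N) n) * Tu⁻¹ := by group
  have hTz : ∀ t : ℤ, ∀ n : N,
      Tu ^ t * ρu n = ρu (MulAut.conjNormal (g ^ t) n) * Tu ^ t := by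
    intro t
    induction t using Int.induction_on with
    | zero => intro n; simp
    | succ t ih =>
      intro n
      have h5 : Tu ^ ((t : ℤ) + 1) = Tu ^ (t : ℤ) * Tu := zpow_add_one Tu t
      have h6 : MulAut.conjNormal (g ^ ((t : ℤ) + 1)) n
          = MulAut.conjNormal (g ^ (t : ℤ)) (φ n) := by
        rw [zpow_add_one, map_mul, MulAut.mul_apply]
        rfl
      calc Tu ^ ((t : ℤ) + 1) * ρu n = Tu ^ (t : ℤ) * (Tu * ρu n) := by rw [h5, mul_assoc]
        _ = Tu ^ (t : ℤ) * (ρu (φ n) * Tu) := by rw [hTuu n]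
        _ = (Tu ^ (t : ℤ) * ρu (φ n)) * Tu := by rw [mul_assoc]
        _ = (ρu (MulAut.conjNormal (g ^ (t : ℤ)) (φ n)) * Tu ^ (t : ℤ)) * Tu := by
            rw [ih (φ n)]
        _ = ρu (MulAut.conjNormal (g ^ ((t : ℤ) + 1)) n) * Tu ^ ((t : ℤ) + 1) := by
            rw [h6, mul_assoc, ← h5]
    | pred t ih =>
      intro n
      have h5 : Tu ^ (-(t : ℤ) - 1) = Tu ^ (-(t : ℤ)) * Tu⁻¹ := by
        rw [zpow_sub_one]
      have h6 : MulAut.conjNormal (g ^ (-(t : ℤ) - 1)) n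
          = MulAut.conjNormal (g ^ (-(t : ℤ))) ((MulAut.conjNormal g⁻¹ : MulAut N) n) := by
        rw [zpow_sub_one, map_mul, MulAut.mul_apply]
      calc Tu ^ (-(t : ℤ) - 1) * ρu n = Tu ^ (-(t : ℤ)) * (Tu⁻¹ * ρu n) := by
            rw [h5, mul_assoc]
        _ = Tu ^ (-(t : ℤ)) * (ρu ((MulAut.conjNormal g⁻¹ : MulAut N) n) * Tu⁻¹) := by
            rw [hTuinv n]
        _ = (Tu ^ (-(t : ℤ)) * ρu ((MulAut.conjNormal g⁻¹ : MulAut N) n)) * Tu⁻¹ := by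
            rw [mul_assoc]
        _ = (ρu (MulAut.conjNormal (g ^ (-(t : ℤ)))
              ((MulAut.conjNormal g⁻¹ : MulAut N) n)) * Tu ^ (-(t : ℤ))) * Tu⁻¹ := by
            rw [ih _]
        _ = ρu (MulAut.conjNormal (g ^ (-(t : ℤ) - 1)) n) * Tu ^ (-(t : ℤ) - 1) := by
            rw [h6, mul_assoc, ← h5]
  -- Schur: Tu^m is a scalar multiple of ρ0 (g^m)
  have hgmN : g ^ (m : ℤ) ∈ N := (hmem m).mpr dvd_rfl
  set w : N := ⟨g ^ (m : ℤ), hgmN⟩ with hw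
  have hconjm : ∀ n : N, MulAut.conjNormal (g ^ (m : ℤ)) n = w * n * w⁻¹ := by
    intro n
    apply Subtype.ext
    rw [MulAut.conjNormal_apply]
    simp [hw]
  have hAcomm : ∀ n : N,
      (((ρu w)⁻¹ * Tu ^ (m : ℤ)) : (Module.End ℂ (Fin d → ℂ))ˣ) * ρu n
        = ρu n * ((ρu w)⁻¹ * Tu ^ (m : ℤ)) := by
    intro n
    have h6 := hTz (m : ℤ) n
    rw [hconjm n, map_mul, map_mul, map_inv] at h6
    calc (ρu w)⁻¹ * Tu ^ (m : ℤ) * ρu n = (ρu w)⁻¹ * (Tu ^ (m : ℤ) * ρu n) := by group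
      _ = (ρu w)⁻¹ * (ρu w * ρu n * (ρu w)⁻¹ * Tu ^ (m : ℤ)) := by rw [h6]
      _ = ρu n * ((ρu w)⁻¹ * Tu ^ (m : ℤ)) := by group
  obtain ⟨c, hc⟩ := schur_endo ρ0 hirr0
      ((((ρu w)⁻¹ * Tu ^ (m : ℤ) : (Module.End ℂ (Fin d → ℂ))ˣ)) :
        Module.End ℂ (Fin d → ℂ))
      (fun n => by
        have h7 := congrArg Units.val (hAcomm n)
        simpa only [Units.val_mul, hρu_val] using h7)
  have hcne : c ≠ 0 := by
    intro h0
    rw [h0, zero_smul] at hc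
    apply hone
    calc (1 : Module.End ℂ (Fin d → ℂ))
        = (((ρu w)⁻¹ * Tu ^ (m : ℤ) : (Module.End ℂ (Fin d → ℂ))ˣ) :
            Module.End ℂ (Fin d → ℂ))
          * ((((ρu w)⁻¹ * Tu ^ (m : ℤ))⁻¹ : (Module.End ℂ (Fin d → ℂ))ˣ) :
            Module.End ℂ (Fin d → ℂ)) := (Units.mul_inv _).symm
      _ = 0 := by rw [hc, zero_mul]
  obtain ⟨z, hz⟩ := IsAlgClosed.exists_pow_nat_eq c hmpos
  have hzne : z ≠ 0 := by
    intro h0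
    apply hcne
    rw [← hz, h0, zero_pow hmpos.ne']
  -- scalar units
  set sU : ℂˣ →* (Module.End ℂ (Fin d → ℂ))ˣ :=
    Units.map (algebraMap ℂ (Module.End ℂ (Fin d → ℂ))).toMonoidHom with hsU
  have hsU_val : ∀ r : ℂˣ, ((sU r : (Module.End ℂ (Fin d → ℂ))ˣ) : Module.End ℂ (Fin d → ℂ))
      = algebraMap ℂ (Module.End ℂ (Fin d → ℂ)) (r : ℂ) := fun r => rfl
  have hsUc : ∀ (r : ℂˣ) (u : (Module.End ℂ (Fin d → ℂ))ˣ), sU r * u = u * sU r := by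
    intro r u
    apply Units.ext
    rw [Units.val_mul, Units.val_mul, hsU_val]
    exact Algebra.commutes (r : ℂ) (u : Module.End ℂ (Fin d → ℂ))
  set zu : ℂˣ := Units.mk0 z hzne with hzu
  set cu : ℂˣ := Units.mk0 c hcne with hcu
  set T1 : (Module.End ℂ (Fin d → ℂ))ˣ := sU zu⁻¹ * Tu with hT1
  have hcomm_su : Commute (sU zu⁻¹) Tu := hsUc zu⁻¹ Tu
  have hT1pow : ∀ t : ℤ, T1 ^ t = sU (zu⁻¹ ^ t) * Tu ^ t := by
    intro t
    rw [hT1, hcomm_su.mul_zpow, map_zpow]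
  have hT1z : ∀ t : ℤ, ∀ n : N,
      T1 ^ t * ρu n = ρu (MulAut.conjNormal (g ^ t) n) * T1 ^ t := by
    intro t n
    rw [hT1pow t, mul_assoc, hTz t n, ← mul_assoc, hsUc _ _, mul_assoc]
  have hTum : (ρu w)⁻¹ * Tu ^ (m : ℤ) = sU cu := by
    apply Units.ext
    rw [hc, hsU_val]
    rw [Algebra.algebraMap_eq_smul_one]
    rfl
  have hT1m : T1 ^ (m : ℤ) = ρu w := by
    have h8 : Tu ^ (m : ℤ) = ρu w * sU cu := by
      rw [← hTum]
      group
    rw [hT1pow, h8, ← mul_assoc, hsUc _ (ρu w), mul_assoc, ← map_mul]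
    have h10 : zu ^ (m : ℕ) = cu := by
      apply Units.ext
      rw [Units.val_pow_eq_pow_val]
      exact hz
    have h9 : zu⁻¹ ^ (m : ℤ) * cu = 1 := by
      rw [inv_zpow, zpow_natCast, h10, inv_mul_cancel]
    rw [h9, map_one, mul_one]
  have hwkey : ∀ s : ℤ, ρu (w ^ s) = T1 ^ ((m : ℤ) * s) := by
    intro s
    rw [map_zpow, ← hT1m, ← zpow_mul]
  set tt : G → ℤ := fun x => Classical.choose (hexists x) with htt_def
  have htt : ∀ x : G, x * (g ^ (tt x))⁻¹ ∈ N := fun x => Classical.choose_spec (hexists x)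
  have hwdu : ∀ (x : G) (t : ℤ) (h : x * (g ^ t)⁻¹ ∈ N),
      ρu ⟨x * (g ^ t)⁻¹, h⟩ * T1 ^ t
        = ρu ⟨x * (g ^ (tt x))⁻¹, htt x⟩ * T1 ^ (tt x) := by
    intro x t h
    have hd : (m : ℤ) ∣ (tt x - t) := by
      rw [← hmem]
      have hrep : g ^ (tt x - t) = (x * (g ^ (tt x))⁻¹)⁻¹ * (x * (g ^ t)⁻¹) := by
        rw [zpow_sub]
        group
      rw [hrep]
      exact N.mul_mem (N.inv_mem (htt x)) h
    obtain ⟨s, hs⟩ := hd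
    have hkey : (⟨x * (g ^ (tt x))⁻¹, htt x⟩ : N) = ⟨x * (g ^ t)⁻¹, h⟩ * (w ^ s)⁻¹ := by
      apply Subtype.ext
      have hws : ((w ^ s : N) : G) = g ^ ((m : ℤ) * s) := by
        rw [SubgroupClass.coe_zpow]
        show ((g ^ (m : ℤ)) ^ s : G) = g ^ ((m : ℤ) * s)
        rw [← zpow_mul]
      show x * (g ^ (tt x))⁻¹ = (x * (g ^ t)⁻¹) * ((w ^ s : N) : G)⁻¹
      rw [hws]
      have htx : tt x = t + (m : ℤ) * s := by rw [← hs]; ring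
      rw [htx, zpow_add]
      group
    rw [hkey, map_mul, map_inv, hwkey s, mul_assoc]
    congr 1
    rw [← zpow_neg, ← zpow_add]
    congr 1
    linarith
  have hmul : ∀ x y : G,
      (ρu ⟨(x * y) * (g ^ (tt (x * y)))⁻¹, htt (x * y)⟩ * T1 ^ (tt (x * y)))
        = (ρu ⟨x * (g ^ (tt x))⁻¹, htt x⟩ * T1 ^ (tt x))
          * (ρu ⟨y * (g ^ (tt y))⁻¹, htt y⟩ * T1 ^ (tt y)) := by
    intro x y
    have hxyt : (x * y) * (g ^ (tt x + tt y))⁻¹ ∈ N := by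
      have hid : (x * y) * (g ^ (tt x + tt y))⁻¹
          = (x * (g ^ (tt x))⁻¹) * (g ^ (tt x) * (y * (g ^ (tt y))⁻¹) * (g ^ (tt x))⁻¹) := by
        rw [zpow_add]
        group
      rw [hid]
      exact N.mul_mem (htt x) (Subgroup.Normal.conj_mem ‹N.Normal› _ (htt y) _)
    rw [← hwdu (x * y) (tt x + tt y) hxyt]
    have hsplit : (⟨(x * y) * (g ^ (tt x + tt y))⁻¹, hxyt⟩ : N)
        = ⟨x * (g ^ (tt x))⁻¹, htt x⟩
          * (MulAut.conjNormal (g ^ (tt x)) ⟨y * (g ^ (tt y))⁻¹, htt y⟩) := by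
      apply Subtype.ext
      rw [Subgroup.coe_mul, MulAut.conjNormal_apply]
      show (x * y) * (g ^ (tt x + tt y))⁻¹
          = (x * (g ^ (tt x))⁻¹) * (g ^ (tt x) * (y * (g ^ (tt y))⁻¹) * (g ^ (tt x))⁻¹)
      rw [zpow_add]
      group
    rw [hsplit, map_mul]
    have hint := hT1z (tt x) ⟨y * (g ^ (tt y))⁻¹, htt y⟩
    calc ρu ⟨x * (g ^ (tt x))⁻¹, htt x⟩
          * ρu (MulAut.conjNormal (g ^ (tt x)) ⟨y * (g ^ (tt y))⁻¹, htt y⟩)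
          * T1 ^ (tt x + tt y)
        = ρu ⟨x * (g ^ (tt x))⁻¹, htt x⟩
          * (ρu (MulAut.conjNormal (g ^ (tt x)) ⟨y * (g ^ (tt y))⁻¹, htt y⟩) * T1 ^ (tt x))
          * T1 ^ (tt y) := by rw [zpow_add]; group
      _ = ρu ⟨x * (g ^ (tt x))⁻¹, htt x⟩
          * (T1 ^ (tt x) * ρu ⟨y * (g ^ (tt y))⁻¹, htt y⟩) * T1 ^ (tt y) := by rw [← hint]
      _ = (ρu ⟨x * (g ^ (tt x))⁻¹, htt x⟩ * T1 ^ (tt x))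
          * (ρu ⟨y * (g ^ (tt y))⁻¹, htt y⟩ * T1 ^ (tt y)) := by group
  set ψu : G →* (Module.End ℂ (Fin d → ℂ))ˣ :=
    MonoidHom.mk' (fun x => ρu ⟨x * (g ^ (tt x))⁻¹, htt x⟩ * T1 ^ (tt x)) hmul with hψu
  set ρψ : Representation ℂ G (Fin d → ℂ) :=
    (Units.coeHom (Module.End ℂ (Fin d → ℂ))).comp ψu with hρψ
  have hresψ : ∀ n : N, ρψ (n : G) = ρ0 n := by
    intro n
    have h0mem : (n : G) * (g ^ (0 : ℤ))⁻¹ ∈ N := by simpa using n.2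
    have h1 := hwdu (n : G) 0 h0mem
    have h2 : (⟨(n : G) * (g ^ (0 : ℤ))⁻¹, h0mem⟩ : N) = n := Subtype.ext (by simp)
    rw [h2, zpow_zero, mul_one] at h1
    show ((ψu (n : G) : (Module.End ℂ (Fin d → ℂ))ˣ) : Module.End ℂ (Fin d → ℂ)) = ρ0 n
    have h3 : ψu (n : G) = ρu n := by
      show ρu ⟨(n : G) * (g ^ (tt (n : G)))⁻¹, htt _⟩ * T1 ^ (tt (n : G)) = ρu n
      rw [← h1]
    rw [h3, hρu_val]
  have hirrψ : IrrRep ρψ := by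
    refine ⟨hntV, fun p hp => hirr0.2 p fun n x hx => ?_⟩
    have := hp (n : G) x hx
    rwa [hresψ n] at this
  refine ⟨charF ρψ, ⟨⟨d, ρψ, rfl⟩, cInner_charF_self_of_irr ρψ hirrψ⟩, ?_⟩
  funext n
  show charF ρψ (n : G) = θ n
  rw [hθeq]
  show LinearMap.trace ℂ _ (ρψ (n : G)) = charF ρ0 n
  rw [hresψ n]
  rfl

end CT
end
end
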